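/- For every decay factor a∈[0,1), PageRank PR^a, defined on the class 𝒢 of all graphs, satisfies Locality (LOC), Edge Deletion (ED), Node Combination (NC), Edge Multiplication (EM) and Baseline (BL). -/

import Mathlib

open Filter

attribute [local instance] Classical.propDecidable

/-- A (directed, weighted) graph `G=(V,E,b,c)`: a finite set of nodes `V ⊆ ℕ`,
a set of directed edges `E ⊆ V × V` (self-loops allowed), node weights `b` and
edge weights `c` (stored as total functions, zero outside `V` resp. `E`). -/
structure PRGraph where
  V : Finset ℕ
  E : Finset (ℕ × ℕ)
  b : ℕ → ℝ
  c : ℕ × ℕ → ℝ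

namespace PRGraph

/-- Well-formedness of a graph: edges connect nodes, node weights are nonnegative,
edge weights are positive, and the weight functions vanish outside `V` resp. `E`. -/
def Valid (G : PRGraph) : Prop :=
  (∀ e ∈ G.E, e.1 ∈ G.V ∧ e.2 ∈ G.V) ∧
  (∀ v, 0 ≤ G.b v) ∧ (∀ v, v ∉ G.V → G.b v = 0) ∧
  (∀ e ∈ G.E, 0 < G.c e) ∧ (∀ e, e ∉ G.E → G.c e = 0)

/-- Out-degree `deg⁺_v(G)`: the total weight of outgoing edges of `v`. -/
noncomputable def degOut (G : PRGraph) (v : ℕ) : ℝ :=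
  ∑ e ∈ G.E.filter (fun e => e.1 = v), G.c e

/-- `ω` is a walk of length `t ≥ 1` in `G`. -/
def IsWalk (G : PRGraph) (t : ℕ) (ω : ℕ → ℕ) : Prop :=
  1 ≤ t ∧ ∀ i < t, (ω i, ω (i + 1)) ∈ G.E

/-- `v` is a successor of `u` (and `u` a predecessor of `v`):
some walk starts at `u` and ends at `v`. -/
def Succ (G : PRGraph) (u v : ℕ) : Prop :=
  ∃ t ω, G.IsWalk t ω ∧ ω 0 = u ∧ ω t = v

/-- `G` is strongly connected: `S(v) = V` for every node `v`. -/
def StronglyConnected (G : PRGraph) : Prop :=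
  ∀ u ∈ G.V, ∀ v ∈ G.V, G.Succ u v

/-- Membership in the class `𝒢^KP` of (disjoint) sums of strongly connected graphs,
characterized by: every node lies on a cycle, and the start of every edge
is reachable back from its end. -/
def InGKP (G : PRGraph) : Prop :=
  G.Valid ∧ (∀ v ∈ G.V, G.Succ v v) ∧ (∀ e ∈ G.E, G.Succ e.2 e.1)

/-- The adjacency matrix of `G`: `A_{u,v} = c(v,u)` if `(v,u) ∈ E` and `0` otherwise. -/
noncomputable def adjMatrix (G : PRGraph) : Matrix {v // v ∈ G.V} {v // v ∈ G.V} ℝ :=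
  fun u v => if ((v : ℕ), (u : ℕ)) ∈ G.E then G.c ((v : ℕ), (u : ℕ)) else 0

/-- The principal eigenvalue `λ`: the largest real eigenvalue of the adjacency matrix. -/
noncomputable def principalEig (G : PRGraph) : ℝ :=
  sSup {r : ℝ | ∃ x : {v // v ∈ G.V} → ℝ, x ≠ 0 ∧ G.adjMatrix.mulVec x = r • x}

/-- The strongly connected component of `v` (as an induced subgraph),
for graphs in `𝒢^KP`. -/
noncomputable def component (G : PRGraph) (v : ℕ) : PRGraph where
  V := G.V.filter (fun u => G.Succ v u)
  E := G.E.filter (fun e => G.Succ v e.1 ∧ G.Succ v e.2)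
  b := fun u => if u ∈ G.V ∧ G.Succ v u then G.b u else 0
  c := fun e => if e ∈ G.E ∧ G.Succ v e.1 ∧ G.Succ v e.2 then G.c e else 0

/-- Membership in the class `𝒢^EV` of sums of strongly connected graphs
all having the same principal eigenvalue. -/
def InGEV (G : PRGraph) : Prop :=
  G.InGKP ∧ ∀ v ∈ G.V, (G.component v).principalEig = G.principalEig

/-- Membership in the class `𝒢^{K(a)}` of graphs whose principal eigenvalue
satisfies `λ < 1/a` (expressed as `a * λ < 1`). -/
def InGK (a : ℝ) (G : PRGraph) : Prop := G.Valid ∧ a * G.principalEig < 1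

/-- `G` is `x`-out-regular for some `x > 0`. -/
def OutRegular (G : PRGraph) : Prop :=
  ∃ x : ℝ, 0 < x ∧ ∀ v ∈ G.V, G.degOut v = x

/-- `G` is semi-out-regular: every node has out-degree `r` or `0`, for some fixed `r > 0`. -/
def SemiOutRegular (G : PRGraph) : Prop :=
  ∃ r : ℝ, 0 < r ∧ ∀ v ∈ G.V, G.degOut v = r ∨ G.degOut v = 0

/-- The distributed process: `p^a_{v,G}(t)` is the sum, over all walks `ω` of length `t`
ending at `v`, of `b(ω(0)) · ∏_{i<t} a·c(ω(i),ω(i+1))/deg⁺_{ω(i)}(G)`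
(for `t = 0` this is `b(v)` for `v ∈ V`). -/
noncomputable def pProc (a : ℝ) (G : PRGraph) (t : ℕ) (v : ℕ) : ℝ :=
  ∑ ω ∈ (Fintype.piFinset (fun _ : Fin (t + 1) => G.V)).filter
      (fun ω => ω (Fin.last t) = v ∧ ∀ i : Fin t, (ω i.castSucc, ω i.succ) ∈ G.E),
    G.b (ω 0) * ∏ i : Fin t,
      a * G.c (ω i.castSucc, ω i.succ) / G.degOut (ω i.castSucc)

/-- The parallel process: `w^a_{v,G}(t)` is the sum, over all walks `ω` of length `t`
ending at `v`, of `b(ω(0)) · ∏_{i<t} a·c(ω(i),ω(i+1))`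
(for `t = 0` this is `b(v)` for `v ∈ V`). -/
noncomputable def wProc (a : ℝ) (G : PRGraph) (t : ℕ) (v : ℕ) : ℝ :=
  ∑ ω ∈ (Fintype.piFinset (fun _ : Fin (t + 1) => G.V)).filter
      (fun ω => ω (Fin.last t) = v ∧ ∀ i : Fin t, (ω i.castSucc, ω i.succ) ∈ G.E),
    G.b (ω 0) * ∏ i : Fin t, a * G.c (ω i.castSucc, ω i.succ)

/-- PageRank with decay factor `a`: `PR^a_v(G) = Σ_{t=0}^∞ p^a_{v,G}(t)`. -/
noncomputable def PageRank (a : ℝ) (G : PRGraph) (v : ℕ) : ℝ := ∑' t : ℕ, pProc a G t v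

/-- Katz centrality with decay factor `a`: `K^a_v(G) = Σ_{t=0}^∞ w^a_{v,G}(t)`. -/
noncomputable def Katz (a : ℝ) (G : PRGraph) (v : ℕ) : ℝ := ∑' t : ℕ, wProc a G t v

/-- Katz prestige: the Cesàro limit `KP_v(G) = lim_{T→∞} Σ_{t=0}^T p^1_{v,G}(t)/T`. -/
noncomputable def KP (G : PRGraph) (v : ℕ) : ℝ :=
  limUnder atTop (fun T : ℕ => (∑ t ∈ Finset.range (T + 1), pProc 1 G t v) / (T : ℝ))

/-- Eigenvector centrality: the Cesàro limit
`EV_v(G) = lim_{T→∞} Σ_{t=0}^T w^{1/λ}_{v,G}(t)/T`. -/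
noncomputable def EV (G : PRGraph) (v : ℕ) : ℝ :=
  limUnder atTop
    (fun T : ℕ => (∑ t ∈ Finset.range (T + 1), wProc (1 / G.principalEig) G t v) / (T : ℝ))

/-- The sum `G + G'` of two graphs (intended for disjoint node sets). -/
noncomputable def gsum (G G' : PRGraph) : PRGraph where
  V := G.V ∪ G'.V
  E := G.E ∪ G'.E
  b := fun v => G.b v + G'.b v
  c := fun e => G.c e + G'.c e

/-- The graph `(V, E ∖ {e₀}, b, c)`. -/
noncomputable def deleteEdge (G : PRGraph) (e₀ : ℕ × ℕ) : PRGraph where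
  V := G.V
  E := G.E.erase e₀
  b := G.b
  c := fun e => if e = e₀ then 0 else G.c e

/-- Multiply the weights of all outgoing edges of `u` by `x`. -/
noncomputable def scaleOut (G : PRGraph) (u : ℕ) (x : ℝ) : PRGraph where
  V := G.V
  E := G.E
  b := G.b
  c := fun e => if e.1 = u then x * G.c e else G.c e

/-- Edge compensation operation at node `u` with constant `x`: multiply the weights of the
non-loop outgoing edges of `u` by `x`, divide `b(u)` and the weights of the non-loop
incoming edges of `u` by `x`. -/
noncomputable def compensate (G : PRGraph) (u : ℕ) (x : ℝ) : PRGraph where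
  V := G.V
  E := G.E
  b := fun v => if v = u then G.b v / x else G.b v
  c := fun e =>
    if e = (u, u) then G.c e
    else if e.1 = u then x * G.c e
    else if e.2 = u then G.c e / x
    else G.c e

/-- Replace the node weights of `G` by `b'`. -/
def withB (G : PRGraph) (b' : ℕ → ℝ) : PRGraph := ⟨G.V, G.E, b', G.c⟩

/-- The graph `(V, E, x·b, c)`. -/
def scaleB (G : PRGraph) (x : ℝ) : PRGraph := G.withB (fun v => x * G.b v)

end PRGraph

/-- Proportional combining `C^F_{u→w}(G)`: scale the weights of the outgoing edges of `u` by
`F_u(G)/(F_u(G)+F_w(G))` and of `w` by `F_w(G)/(F_u(G)+F_w(G))`, then merge `u` into `w`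
(delete `u`, redirect its incoming and outgoing edges to `w`, summing weights of parallel
edges, and add `b(u)` to `b(w)`). -/
noncomputable def combine (F : PRGraph → ℕ → ℝ) (G : PRGraph) (u w : ℕ) : PRGraph :=
  let m : ℕ → ℕ := fun x => if x = u then w else x
  let scale : ℕ × ℕ → ℝ := fun e =>
    (if e.1 = u then F G u / (F G u + F G w)
     else if e.1 = w then F G w / (F G u + F G w) else 1) * G.c e
  { V := G.V.erase u
    E := G.E.image (fun e => (m e.1, m e.2))
    b := fun v => if v = u then 0 else if v = w then G.b u + G.b w else G.b v
    c := fun e' =>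
      if e' ∈ G.E.image (fun e => (m e.1, m e.2)) then
        ∑ e ∈ G.E.filter (fun e => (m e.1, m e.2) = e'), scale e
      else 0 }

/-- Locality (LOC), relative to the domain class `D`. -/
def LOC (D : PRGraph → Prop) (F : PRGraph → ℕ → ℝ) : Prop :=
  ∀ G G' : PRGraph, Disjoint G.V G'.V → D G → D G' → D (G.gsum G') →
    ∀ v ∈ G.V, F (G.gsum G') v = F G v

/-- Edge Deletion (ED), relative to the domain class `D`. -/
def ED (D : PRGraph → Prop) (F : PRGraph → ℕ → ℝ) : Prop :=
  ∀ G : PRGraph, D G → ∀ e ∈ G.E, D (G.deleteEdge e) →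
    ∀ v ∈ G.V, ¬ G.Succ e.1 v → F (G.deleteEdge e) v = F G v

/-- Node Combination (NC), relative to the domain class `D`. -/
def NC (D : PRGraph → Prop) (F : PRGraph → ℕ → ℝ) : Prop :=
  ∀ G : PRGraph, D G → ∀ u ∈ G.V, ∀ w ∈ G.V, u ≠ w →
    G.degOut u = G.degOut w →
    (∀ s, G.Succ u s ∨ G.Succ w s → G.degOut s = G.degOut u) →
    D (combine F G u w) →
    (∀ v ∈ G.V, v ≠ u → v ≠ w → F (combine F G u w) v = F G v) ∧
    F (combine F G u w) w = F G u + F G w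

/-- Edge Multiplication (EM), relative to the domain class `D`. -/
def EM (D : PRGraph → Prop) (F : PRGraph → ℕ → ℝ) : Prop :=
  ∀ G : PRGraph, D G → ∀ u ∈ G.V, ∀ x : ℝ, 0 < x → D (G.scaleOut u x) →
    ∀ v ∈ G.V, F (G.scaleOut u x) v = F G v

/-- Edge Compensation (EC), relative to the domain class `D`. -/
def EC (D : PRGraph → Prop) (F : PRGraph → ℕ → ℝ) : Prop :=
  ∀ G : PRGraph, D G → ∀ u ∈ G.V, ∀ x : ℝ, 0 < x → D (G.compensate u x) →
    (∀ v ∈ G.V, v ≠ u → F (G.compensate u x) v = F G v) ∧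
    F (G.compensate u x) u = F G u / x

/-- Baseline (BL), relative to the domain class `D`. -/
def BL (D : PRGraph → Prop) (F : PRGraph → ℕ → ℝ) : Prop :=
  ∀ G : PRGraph, D G → ∀ v ∈ G.V, (∀ e ∈ G.E, e.1 ≠ v ∧ e.2 ≠ v) → F G v = G.b v

/-- A cycle graph: strongly connected, and every node has exactly one outgoing edge. -/
def IsCycleGraph (G : PRGraph) : Prop :=
  G.StronglyConnected ∧ ∀ v ∈ G.V, (G.E.filter (fun e => e.1 = v)).card = 1

/-- Cycle (CY), relative to the domain class `D`. -/
def CY (D : PRGraph → Prop) (F : PRGraph → ℕ → ℝ) : Prop :=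
  ∀ G : PRGraph, D G → IsCycleGraph G → (∀ e ∈ G.E, ∀ e' ∈ G.E, G.c e = G.c e') →
    ∀ v ∈ G.V, F G v = (∑ u ∈ G.V, G.b u) / (G.V.card : ℝ)

/-- The three-node graph used to define the profit function: nodes `{0,1,2}` (as `u,v,w`),
an edge `(u,v)` of weight `y`, an edge `(u,w)` of weight `z-y` if `y < z` (no such edge
if `y = z`), `b(u) = x` and `b(v) = b(w) = 0`. -/
noncomputable def profitGraph (x y z : ℝ) : PRGraph where
  V := {0, 1, 2}
  E := if y < z then {(0, 1), (0, 2)} else {(0, 1)}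
  b := fun v => if v = 0 then x else 0
  c := fun e => if e = (0, 1) then y else if e = (0, 2) ∧ y < z then z - y else 0

/-- The profit function `p_F(x,y,z)` of a centrality measure `F`. -/
noncomputable def profit (F : PRGraph → ℕ → ℝ) (x y z : ℝ) : ℝ := F (profitGraph x y z) 1


section Helpers

namespace PRaux

open PRGraph Finset

variable {G : PRGraph} {a : ℝ}

lemma c_nonneg (hG : G.Valid) (e : ℕ × ℕ) : 0 ≤ G.c e := by
  by_cases h : e ∈ G.E
  · exact (hG.2.2.2.1 e h).le
  · rw [hG.2.2.2.2 e h]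

lemma c_eq_zero (hG : G.Valid) {e : ℕ × ℕ} (h : e ∉ G.E) : G.c e = 0 := hG.2.2.2.2 e h

lemma degOut_nonneg (hG : G.Valid) (v : ℕ) : 0 ≤ G.degOut v :=
  Finset.sum_nonneg fun e he => (hG.2.2.2.1 e (Finset.mem_of_mem_filter e he)).le

lemma pProc_nonneg (hG : G.Valid) (ha0 : 0 ≤ a) (t v : ℕ) : 0 ≤ G.pProc a t v := by
  refine Finset.sum_nonneg fun ω hω => mul_nonneg (hG.2.1 _) (Finset.prod_nonneg fun i _ => ?_)
  exact div_nonneg (mul_nonneg ha0 (c_nonneg hG _)) (degOut_nonneg hG _)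

lemma pProc_not_mem (hv : v ∉ G.V) (t : ℕ) : G.pProc a t v = 0 := by
  refine Finset.sum_eq_zero fun ω hω => ?_
  simp only [Finset.mem_filter, Fintype.mem_piFinset] at hω
  exact absurd (hω.2.1 ▸ hω.1 (Fin.last t)) hv

lemma pProc_zero (v : ℕ) : G.pProc a 0 v = if v ∈ G.V then G.b v else 0 := by
  unfold PRGraph.pProc
  split_ifs with hv
  · rw [Finset.sum_eq_single (fun _ : Fin 1 => v)]
    · simp
    · intro ω hω hne
      exfalso; apply hne; funext i
      simp only [Finset.mem_filter, Fintype.mem_piFinset] at hω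
      have : i = Fin.last 0 := Subsingleton.elim _ _
      rw [this]; exact hω.2.1
    · intro h
      exact absurd (Finset.mem_filter.mpr
        ⟨Fintype.mem_piFinset.mpr fun _ => hv, rfl, fun i => i.elim0⟩) h
  · refine Finset.sum_eq_zero fun ω hω => ?_
    simp only [Finset.mem_filter, Fintype.mem_piFinset] at hω
    exact absurd (hω.2.1 ▸ hω.1 (Fin.last 0)) hv


lemma pProc_succ (hG : G.Valid) (t v : ℕ) :
    G.pProc a (t + 1) v = ∑ s ∈ G.V, G.pProc a t s * (a * G.c (s, v) / G.degOut s) := by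
  have hzero : ∀ s : ℕ, (s, v) ∉ G.E →
      G.pProc a t s * (a * G.c (s, v) / G.degOut s) = 0 := by
    intro s hs
    rw [c_eq_zero hG hs, mul_zero, zero_div, mul_zero]
  rw [← Finset.sum_filter_add_sum_filter_not G.V (fun s => (s, v) ∈ G.E),
    Finset.sum_eq_zero (fun s hs => hzero s (Finset.mem_filter.mp hs).2), add_zero]
  have hrw : ∀ s ∈ G.V.filter (fun s => (s, v) ∈ G.E),
      G.pProc a t s * (a * G.c (s, v) / G.degOut s)
      = ∑ ω ∈ (Fintype.piFinset (fun _ : Fin (t + 1) => G.V)).filter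
          (fun ω => ω (Fin.last t) = s ∧ ∀ i : Fin t, (ω i.castSucc, ω i.succ) ∈ G.E),
        (G.b (ω 0) * ∏ i : Fin t,
          a * G.c (ω i.castSucc, ω i.succ) / G.degOut (ω i.castSucc))
            * (a * G.c (s, v) / G.degOut s) := fun s _ => Finset.sum_mul _ _ _
  rw [Finset.sum_congr rfl hrw, Finset.sum_sigma']
  unfold PRGraph.pProc
  refine (Finset.sum_nbij' (fun p : (_ : ℕ) × (Fin (t + 1) → ℕ) => Fin.snoc p.2 v)
    (fun ω => ⟨ω (Fin.last t).castSucc, Fin.init ω⟩) ?_ ?_ ?_ ?_ ?_).symm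
  · rintro ⟨s, ω'⟩ hp
    rw [Finset.mem_sigma] at hp
    obtain ⟨hs, hω'⟩ := hp
    rw [Finset.mem_filter] at hs hω'
    obtain ⟨hsV, hsE⟩ := hs
    obtain ⟨hω'pi, hω'last, hω'edge⟩ := hω'
    rw [Fintype.mem_piFinset] at hω'pi
    dsimp only at hsV hsE hω'pi hω'last hω'edge ⊢
    refine Finset.mem_filter.mpr ⟨Fintype.mem_piFinset.mpr ?_, ?_, ?_⟩
    · intro i
      refine Fin.lastCases ?_ ?_ i
      · simp only [Fin.snoc_last]; exact (hG.1 _ hsE).2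
      · intro k; simp only [Fin.snoc_castSucc]; exact hω'pi k
    · simp only [Fin.snoc_last]
    · intro i
      refine Fin.lastCases ?_ ?_ i
      · simp only [Fin.succ_last, Fin.snoc_last, Fin.snoc_castSucc]
        rw [hω'last]; exact hsE
      · intro k
        simp only [Fin.succ_castSucc, Fin.snoc_castSucc]
        exact hω'edge k
  · intro ω hω
    rw [Finset.mem_filter] at hω
    obtain ⟨hopi, hlast, hedge⟩ := hω
    rw [Fintype.mem_piFinset] at hopi
    refine Finset.mem_sigma.mpr ⟨Finset.mem_filter.mpr ⟨hopi _, ?_⟩,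
      Finset.mem_filter.mpr ⟨Fintype.mem_piFinset.mpr (fun i => hopi _), rfl, ?_⟩⟩
    · have := hedge (Fin.last t)
      rwa [Fin.succ_last, hlast] at this
    · intro k
      have := hedge k.castSucc
      show (ω k.castSucc.castSucc, ω k.succ.castSucc) ∈ G.E
      rwa [← Fin.succ_castSucc]
  · rintro ⟨s, ω'⟩ hp
    rw [Finset.mem_sigma] at hp
    have hlast : ω' (Fin.last t) = s := (Finset.mem_filter.mp hp.2).2.1
    dsimp only
    rw [show (Fin.snoc ω' v : Fin (t + 2) → ℕ) (Fin.last t).castSucc = s by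
      rw [Fin.snoc_castSucc, hlast], Fin.init_snoc]
  · intro ω hω
    have hlast : ω (Fin.last (t + 1)) = v := (Finset.mem_filter.mp hω).2.1
    dsimp only
    rw [← hlast]
    exact Fin.snoc_init_self ω
  · rintro ⟨s, ω'⟩ hp
    rw [Finset.mem_sigma] at hp
    have hlast : ω' (Fin.last t) = s := (Finset.mem_filter.mp hp.2).2.1
    dsimp only
    rw [Fin.prod_univ_castSucc]
    rw [show (Fin.snoc ω' v : Fin (t + 2) → ℕ) 0 = ω' 0 by
      rw [show (0 : Fin (t + 2)) = (0 : Fin (t + 1)).castSucc from (Fin.castSucc_zero).symm,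
        Fin.snoc_castSucc]]
    simp only [Fin.succ_castSucc, Fin.snoc_castSucc, Fin.succ_last, Fin.snoc_last]
    rw [hlast, mul_assoc]
lemma sum_over_V_out (hG : G.Valid) (s : ℕ) (g : ℕ × ℕ → ℝ)
    (hg : ∀ v, (s, v) ∉ G.E → g (s, v) = 0) :
    ∑ v ∈ G.V, g (s, v) = ∑ e ∈ G.E.filter (fun e => e.1 = s), g e := by
  rw [← Finset.sum_filter_add_sum_filter_not G.V (fun v => (s, v) ∈ G.E),
    Finset.sum_eq_zero (fun v hv => hg v (Finset.mem_filter.mp hv).2), add_zero]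
  refine Finset.sum_nbij' (fun v => (s, v)) (fun e => e.2) ?_ ?_ ?_ ?_ ?_
  · intro v hv; exact Finset.mem_filter.mpr ⟨(Finset.mem_filter.mp hv).2, rfl⟩
  · intro e he
    obtain ⟨heE, he1⟩ := Finset.mem_filter.mp he
    have hee : (s, e.2) = e := by rw [← he1]
    exact Finset.mem_filter.mpr ⟨(hG.1 e heE).2, hee ▸ heE⟩
  · intro v _; rfl
  · intro e he
    obtain ⟨heE, he1⟩ := Finset.mem_filter.mp he
    rw [← he1]
  · intro v _; rfl

lemma sum_over_V_in (hG : G.Valid) (y : ℕ) (g : ℕ × ℕ → ℝ)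
    (hg : ∀ v, (v, y) ∉ G.E → g (v, y) = 0) :
    ∑ v ∈ G.V, g (v, y) = ∑ e ∈ G.E.filter (fun e => e.2 = y), g e := by
  rw [← Finset.sum_filter_add_sum_filter_not G.V (fun v => (v, y) ∈ G.E),
    Finset.sum_eq_zero (fun v hv => hg v (Finset.mem_filter.mp hv).2), add_zero]
  refine Finset.sum_nbij' (fun v => (v, y)) (fun e => e.1) ?_ ?_ ?_ ?_ ?_
  · intro v hv; exact Finset.mem_filter.mpr ⟨(Finset.mem_filter.mp hv).2, rfl⟩
  · intro e he
    obtain ⟨heE, he2⟩ := Finset.mem_filter.mp he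
    have hee : (e.1, y) = e := by rw [← he2]
    exact Finset.mem_filter.mpr ⟨(hG.1 e heE).1, hee ▸ heE⟩
  · intro v _; rfl
  · intro e he
    obtain ⟨heE, he2⟩ := Finset.mem_filter.mp he
    rw [← he2]
  · intro v _; rfl

lemma sum_c_eq_degOut (hG : G.Valid) (s : ℕ) : ∑ v ∈ G.V, G.c (s, v) = G.degOut s :=
  sum_over_V_out hG s G.c (fun _ h => c_eq_zero hG h)

lemma sum_MV_le (hG : G.Valid) (ha0 : 0 ≤ a) (s : ℕ) :
    ∑ v ∈ G.V, a * G.c (s, v) / G.degOut s ≤ a := by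
  have h' : ∑ v ∈ G.V, a * G.c (s, v) / G.degOut s = a * G.degOut s / G.degOut s := by
    rw [← Finset.sum_div, ← Finset.mul_sum, sum_c_eq_degOut hG s]
  rw [h']
  rcases eq_or_ne (G.degOut s) 0 with h | h
  · rw [h, div_zero]; exact ha0
  · rw [mul_div_assoc, div_self h, mul_one]

lemma sum_pProc_le (hG : G.Valid) (ha0 : 0 ≤ a) (t : ℕ) :
    ∑ v ∈ G.V, G.pProc a t v ≤ a ^ t * ∑ v ∈ G.V, G.b v := by
  induction t with
  | zero =>
    rw [pow_zero, one_mul]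
    refine le_of_eq (Finset.sum_congr rfl fun v hv => ?_)
    rw [pProc_zero, if_pos hv]
  | succ t ih =>
    rw [Finset.sum_congr rfl (fun v (_ : v ∈ G.V) => pProc_succ hG t v), Finset.sum_comm]
    calc ∑ s ∈ G.V, ∑ v ∈ G.V, G.pProc a t s * (a * G.c (s, v) / G.degOut s)
        = ∑ s ∈ G.V, G.pProc a t s * ∑ v ∈ G.V, (a * G.c (s, v) / G.degOut s) :=
          Finset.sum_congr rfl fun s _ => (Finset.mul_sum _ _ _).symm
      _ ≤ ∑ s ∈ G.V, G.pProc a t s * a :=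
          Finset.sum_le_sum fun s _ =>
            mul_le_mul_of_nonneg_left (sum_MV_le hG ha0 s) (pProc_nonneg hG ha0 t s)
      _ = a * ∑ s ∈ G.V, G.pProc a t s := by
          rw [← Finset.sum_mul, mul_comm]
      _ ≤ a * (a ^ t * ∑ v ∈ G.V, G.b v) := mul_le_mul_of_nonneg_left ih ha0
      _ = a ^ (t + 1) * ∑ v ∈ G.V, G.b v := by ring

lemma pProc_le_geom (hG : G.Valid) (ha0 : 0 ≤ a) (t v : ℕ) :
    G.pProc a t v ≤ a ^ t * ∑ u ∈ G.V, G.b u := by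
  by_cases hv : v ∈ G.V
  · exact le_trans (Finset.single_le_sum (fun s _ => pProc_nonneg hG ha0 t s) hv)
      (sum_pProc_le hG ha0 t)
  · rw [pProc_not_mem hv]
    exact mul_nonneg (pow_nonneg ha0 t) (Finset.sum_nonneg fun u _ => hG.2.1 u)

lemma summable_pProc (hG : G.Valid) (ha0 : 0 ≤ a) (ha1 : a < 1) (v : ℕ) :
    Summable (fun t => G.pProc a t v) :=
  Summable.of_nonneg_of_le (fun t => pProc_nonneg hG ha0 t v)
    (fun t => pProc_le_geom hG ha0 t v)
    ((summable_geometric_of_lt_one ha0 ha1).mul_right _)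

lemma PageRank_nonneg (hG : G.Valid) (ha0 : 0 ≤ a) (v : ℕ) : 0 ≤ G.PageRank a v :=
  tsum_nonneg (fun t => pProc_nonneg hG ha0 t v)

lemma PageRank_rec (hG : G.Valid) (ha0 : 0 ≤ a) (ha1 : a < 1) (v : ℕ) :
    G.PageRank a v = (if v ∈ G.V then G.b v else 0)
      + ∑ s ∈ G.V, G.PageRank a s * (a * G.c (s, v) / G.degOut s) := by
  unfold PRGraph.PageRank
  rw [Summable.tsum_eq_zero_add (summable_pProc hG ha0 ha1 v), pProc_zero]
  congr 1
  calc ∑' t : ℕ, G.pProc a (t + 1) v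
      = ∑' t : ℕ, ∑ s ∈ G.V, G.pProc a t s * (a * G.c (s, v) / G.degOut s) :=
        tsum_congr fun t => pProc_succ hG t v
    _ = ∑ s ∈ G.V, ∑' t : ℕ, G.pProc a t s * (a * G.c (s, v) / G.degOut s) :=
        Summable.tsum_finsetSum fun s _ => (summable_pProc hG ha0 ha1 s).mul_right _
    _ = ∑ s ∈ G.V, G.PageRank a s * (a * G.c (s, v) / G.degOut s) :=
        Finset.sum_congr rfl fun s _ => tsum_mul_right

lemma recur_unique (hG : G.Valid) (ha0 : 0 ≤ a) (ha1 : a < 1) (x y : ℕ → ℝ)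
    (hx : ∀ v ∈ G.V, x v = G.b v + ∑ s ∈ G.V, x s * (a * G.c (s, v) / G.degOut s))
    (hy : ∀ v ∈ G.V, y v = G.b v + ∑ s ∈ G.V, y s * (a * G.c (s, v) / G.degOut s)) :
    ∀ v ∈ G.V, x v = y v := by
  have hM0 : ∀ s v : ℕ, 0 ≤ a * G.c (s, v) / G.degOut s := fun s v =>
    div_nonneg (mul_nonneg ha0 (c_nonneg hG _)) (degOut_nonneg hG s)
  have hD : ∀ v ∈ G.V, x v - y v
      = ∑ s ∈ G.V, (x s - y s) * (a * G.c (s, v) / G.degOut s) := by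
    intro v hv
    rw [hx v hv, hy v hv, add_sub_add_left_eq_sub, ← Finset.sum_sub_distrib]
    exact Finset.sum_congr rfl fun s _ => (sub_mul _ _ _).symm
  have hSle : ∑ v ∈ G.V, |x v - y v| ≤ a * ∑ v ∈ G.V, |x v - y v| := by
    calc ∑ v ∈ G.V, |x v - y v|
        ≤ ∑ v ∈ G.V, ∑ s ∈ G.V, |x s - y s| * (a * G.c (s, v) / G.degOut s) := by
          refine Finset.sum_le_sum fun v hv => ?_
          rw [hD v hv]
          refine (Finset.abs_sum_le_sum_abs _ _).trans ?_
          refine le_of_eq (Finset.sum_congr rfl fun s _ => ?_)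
          rw [abs_mul, abs_of_nonneg (hM0 s v)]
      _ = ∑ s ∈ G.V, |x s - y s| * ∑ v ∈ G.V, (a * G.c (s, v) / G.degOut s) := by
          rw [Finset.sum_comm]
          exact Finset.sum_congr rfl fun s _ => (Finset.mul_sum _ _ _).symm
      _ ≤ ∑ s ∈ G.V, |x s - y s| * a :=
          Finset.sum_le_sum fun s _ =>
            mul_le_mul_of_nonneg_left (sum_MV_le hG ha0 s) (abs_nonneg _)
      _ = a * ∑ v ∈ G.V, |x v - y v| := by
          rw [← Finset.sum_mul, mul_comm]
  have hS0 : 0 ≤ ∑ v ∈ G.V, |x v - y v| := Finset.sum_nonneg fun v _ => abs_nonneg _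
  have hS : ∑ v ∈ G.V, |x v - y v| = 0 := by nlinarith
  intro v hv
  have := (Finset.sum_eq_zero_iff_of_nonneg
    (fun v _ => abs_nonneg (x v - y v))).mp hS v hv
  exact sub_eq_zero.mp (abs_eq_zero.mp this)

lemma BL_pagerank (ha0 : 0 ≤ a) : BL PRGraph.Valid (PRGraph.PageRank a) := by
  intro G hG v hv hno
  unfold PRGraph.PageRank
  rw [tsum_eq_single 0 ?_]
  · rw [pProc_zero, if_pos hv]
  · intro t ht
    obtain ⟨t', rfl⟩ : ∃ t', t = t' + 1 :=
      ⟨t - 1, (Nat.succ_pred_eq_of_pos (Nat.pos_of_ne_zero ht)).symm⟩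
    refine Finset.sum_eq_zero fun ω hω => ?_
    obtain ⟨hpi, hlast, hedge⟩ := Finset.mem_filter.mp hω
    have hE := hedge (Fin.last t')
    rw [Fin.succ_last, hlast] at hE
    exact absurd rfl ((hno _ hE).2)

lemma degOut_scaleOut (G : PRGraph) (u : ℕ) (x : ℝ) (s : ℕ) :
    (G.scaleOut u x).degOut s = if s = u then x * G.degOut s else G.degOut s := by
  show ∑ e ∈ G.E.filter (fun e => e.1 = s), (if e.1 = u then x * G.c e else G.c e) = _
  split_ifs with h
  · subst h
    rw [PRGraph.degOut, Finset.mul_sum]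
    refine Finset.sum_congr rfl fun e he => ?_
    rw [if_pos (Finset.mem_filter.mp he).2]
  · refine Finset.sum_congr rfl fun e he => ?_
    rw [if_neg]
    rw [(Finset.mem_filter.mp he).2]
    exact h

lemma pProc_scaleOut {u : ℕ} {x : ℝ} (hx : x ≠ 0) (t v : ℕ) :
    (G.scaleOut u x).pProc a t v = G.pProc a t v := by
  unfold PRGraph.pProc
  refine Finset.sum_congr rfl fun ω hω => congrArg _ (Finset.prod_congr rfl fun i _ => ?_)
  have hc : (G.scaleOut u x).c (ω i.castSucc, ω i.succ)
      = if ω i.castSucc = u then x * G.c (ω i.castSucc, ω i.succ)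
        else G.c (ω i.castSucc, ω i.succ) := rfl
  rw [hc, degOut_scaleOut]
  by_cases h : ω i.castSucc = u
  · rw [if_pos h, if_pos h,
      show a * (x * G.c (ω i.castSucc, ω i.succ)) = x * (a * G.c (ω i.castSucc, ω i.succ))
        by ring,
      mul_div_mul_left _ _ hx]
  · rw [if_neg h, if_neg h]

lemma EM_pagerank : EM PRGraph.Valid (PRGraph.PageRank a) := by
  intro G hG u hu x hx hD v hv
  exact tsum_congr fun t => pProc_scaleOut (G := G) (a := a) (ne_of_gt hx) t v

lemma walk_in_left {G G' : PRGraph} (hG : G.Valid) (hG' : G'.Valid)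
    (hdis : Disjoint G.V G'.V) {t : ℕ} {ω : Fin (t + 1) → ℕ}
    (hmem : ∀ i, ω i ∈ G.V ∪ G'.V)
    (hedge : ∀ i : Fin t, (ω i.castSucc, ω i.succ) ∈ G.E ∪ G'.E)
    (hlast : ω (Fin.last t) ∈ G.V) :
    (∀ i, ω i ∈ G.V) ∧ ∀ i : Fin t, (ω i.castSucc, ω i.succ) ∈ G.E := by
  have disj : ∀ z, z ∈ G.V → z ∉ G'.V := fun z hz hz' =>
    Finset.disjoint_left.mp hdis hz hz'
  have key : ∀ k : ℕ, ∀ i : Fin (t + 1), (i : ℕ) + k = t → ω i ∈ G.V := by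
    intro k
    induction k with
    | zero =>
      intro i hi
      have : i = Fin.last t := Fin.ext (by simpa using hi)
      rwa [this]
    | succ k ih =>
      intro i hi
      have hlt : (i : ℕ) < t := by omega
      have hjc : (⟨(i : ℕ), hlt⟩ : Fin t).castSucc = i := Fin.ext rfl
      have hjs : (((⟨(i : ℕ), hlt⟩ : Fin t).succ : Fin (t + 1)) : ℕ) + k = t := by
        simp only [Fin.val_succ]; omega
      have hnext : ω (⟨(i : ℕ), hlt⟩ : Fin t).succ ∈ G.V := ih _ hjs
      rcases Finset.mem_union.mp (hedge ⟨(i : ℕ), hlt⟩) with hE | hE'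
      · rw [← hjc]; exact (hG.1 _ hE).1
      · exact absurd (hG'.1 _ hE').2 (disj _ hnext)
  have hVmem : ∀ i, ω i ∈ G.V := fun i => key (t - (i : ℕ)) i (by omega)
  refine ⟨hVmem, fun i => ?_⟩
  rcases Finset.mem_union.mp (hedge i) with hE | hE'
  · exact hE
  · exact absurd (hG'.1 _ hE').2 (disj _ (hVmem i.succ))

lemma degOut_gsum_left {G G' : PRGraph} (hG' : G'.Valid) {s : ℕ} (hs : s ∉ G'.V) :
    (G.gsum G').degOut s = G.degOut s := by
  show ∑ e ∈ (G.E ∪ G'.E).filter (fun e => e.1 = s), (G.c e + G'.c e) = _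
  rw [Finset.filter_union]
  have h2 : G'.E.filter (fun e => e.1 = s) = ∅ :=
    Finset.filter_eq_empty_iff.mpr fun e he h => hs (h ▸ (hG'.1 e he).1)
  rw [h2, Finset.union_empty]
  refine Finset.sum_congr rfl fun e he => ?_
  have he1 := (Finset.mem_filter.mp he).2
  have heG' : e ∉ G'.E := fun h' => hs (he1 ▸ (hG'.1 e h').1)
  rw [c_eq_zero hG' heG', add_zero]

lemma pProc_gsum_left {G G' : PRGraph} (hG : G.Valid) (hG' : G'.Valid)
    (hdis : Disjoint G.V G'.V) {v : ℕ} (hv : v ∈ G.V) (t : ℕ) :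
    (G.gsum G').pProc a t v = G.pProc a t v := by
  have disj : ∀ z, z ∈ G.V → z ∉ G'.V := fun z hz hz' =>
    Finset.disjoint_left.mp hdis hz hz'
  unfold PRGraph.pProc
  have hset : (Fintype.piFinset fun _ : Fin (t + 1) => (G.gsum G').V).filter
        (fun ω => ω (Fin.last t) = v ∧ ∀ i : Fin t,
          (ω i.castSucc, ω i.succ) ∈ (G.gsum G').E)
      = (Fintype.piFinset fun _ : Fin (t + 1) => G.V).filter
        (fun ω => ω (Fin.last t) = v ∧ ∀ i : Fin t, (ω i.castSucc, ω i.succ) ∈ G.E) := by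
    ext ω
    simp only [Finset.mem_filter, Fintype.mem_piFinset]
    constructor
    · rintro ⟨hpi, hlast, hedge⟩
      have := walk_in_left hG hG' hdis hpi hedge (hlast ▸ hv)
      exact ⟨this.1, hlast, this.2⟩
    · rintro ⟨hpi, hlast, hedge⟩
      exact ⟨fun i => Finset.mem_union_left _ (hpi i), hlast,
        fun i => Finset.mem_union_left _ (hedge i)⟩
  rw [hset]
  refine Finset.sum_congr rfl fun ω hω => ?_
  obtain ⟨hpi, hlast, hedge⟩ := Finset.mem_filter.mp hω
  rw [Fintype.mem_piFinset] at hpi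
  have hb : (G.gsum G').b (ω 0) = G.b (ω 0) := by
    show G.b (ω 0) + G'.b (ω 0) = G.b (ω 0)
    rw [hG'.2.2.1 (ω 0) (disj _ (hpi 0)), add_zero]
  rw [hb]
  refine congrArg _ (Finset.prod_congr rfl fun i _ => ?_)
  have hcc : (G.gsum G').c (ω i.castSucc, ω i.succ) = G.c (ω i.castSucc, ω i.succ) := by
    show G.c _ + G'.c _ = G.c _
    have : (ω i.castSucc, ω i.succ) ∉ G'.E := fun h' =>
      disj _ (hpi i.castSucc) (hG'.1 _ h').1
    rw [c_eq_zero hG' this, add_zero]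
  rw [hcc, degOut_gsum_left hG' (disj _ (hpi i.castSucc))]

lemma LOC_pagerank : LOC PRGraph.Valid (PRGraph.PageRank a) := by
  intro G G' hdis hG hG' _ v hv
  exact tsum_congr fun t => pProc_gsum_left hG hG' hdis hv t

lemma succ_of_walk {t : ℕ} {ω : Fin (t + 1) → ℕ}
    (hedge : ∀ i : Fin t, (ω i.castSucc, ω i.succ) ∈ G.E)
    (i : Fin (t + 1)) (hi : (i : ℕ) < t) : G.Succ (ω i) (ω (Fin.last t)) := by
  refine ⟨t - (i : ℕ), fun k => ω ⟨min (k + (i : ℕ)) t, by omega⟩, ⟨by omega, ?_⟩, ?_, ?_⟩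
  · intro k hk
    have hk' : k + (i : ℕ) < t := by omega
    dsimp only
    have e1 : (⟨min (k + (i : ℕ)) t, by omega⟩ : Fin (t + 1))
        = (⟨k + (i : ℕ), hk'⟩ : Fin t).castSucc :=
      Fin.ext (by simp only [Fin.coe_castSucc]; omega)
    have e2 : (⟨min (k + 1 + (i : ℕ)) t, by omega⟩ : Fin (t + 1))
        = (⟨k + (i : ℕ), hk'⟩ : Fin t).succ :=
      Fin.ext (by simp only [Fin.val_succ]; omega)
    rw [e1, e2]
    exact hedge _
  · dsimp only
    congr 1
    exact Fin.ext (show (0 + (i : ℕ)) ⊓ t = (i : ℕ) by omega)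
  · dsimp only
    congr 1
    exact Fin.ext (show ((t - (i : ℕ)) + (i : ℕ)) ⊓ t = t by omega)

lemma ED_pagerank : ED PRGraph.Valid (PRGraph.PageRank a) := by
  intro G hG e₀ he₀ hD v hv hnsucc
  refine tsum_congr fun t => ?_
  unfold PRGraph.pProc
  have hnotu : ∀ ω : Fin (t + 1) → ℕ, ω (Fin.last t) = v →
      (∀ i : Fin t, (ω i.castSucc, ω i.succ) ∈ G.E) →
      ∀ i : Fin t, ω i.castSucc ≠ e₀.1 := by
    intro ω hlast hedge i hi
    apply hnsucc
    have := succ_of_walk hedge i.castSucc (by simpa using i.isLt)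
    rwa [hi, hlast] at this
  have hset : (Fintype.piFinset fun _ : Fin (t + 1) => (G.deleteEdge e₀).V).filter
        (fun ω => ω (Fin.last t) = v ∧ ∀ i : Fin t,
          (ω i.castSucc, ω i.succ) ∈ (G.deleteEdge e₀).E)
      = (Fintype.piFinset fun _ : Fin (t + 1) => G.V).filter
        (fun ω => ω (Fin.last t) = v ∧ ∀ i : Fin t, (ω i.castSucc, ω i.succ) ∈ G.E) := by
    ext ω
    simp only [Finset.mem_filter, Fintype.mem_piFinset]
    constructor
    · rintro ⟨hpi, hlast, hedge⟩
      exact ⟨hpi, hlast, fun i => Finset.mem_of_mem_erase (hedge i)⟩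
    · rintro ⟨hpi, hlast, hedge⟩
      refine ⟨hpi, hlast, fun i => Finset.mem_erase.mpr ⟨?_, hedge i⟩⟩
      intro heq
      exact hnotu ω hlast hedge i (congrArg Prod.fst heq)
  rw [hset]
  refine Finset.sum_congr rfl fun ω hω => ?_
  obtain ⟨hpi, hlast, hedge⟩ := Finset.mem_filter.mp hω
  refine congrArg _ (Finset.prod_congr rfl fun i _ => ?_)
  have hne := hnotu ω hlast hedge i
  have hcc : (G.deleteEdge e₀).c (ω i.castSucc, ω i.succ) = G.c (ω i.castSucc, ω i.succ) := by
    show (if (ω i.castSucc, ω i.succ) = e₀ then 0 else G.c _) = G.c _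
    rw [if_neg (fun h => hne (congrArg Prod.fst h))]
  have hdeg : (G.deleteEdge e₀).degOut (ω i.castSucc) = G.degOut (ω i.castSucc) := by
    show ∑ e ∈ (G.E.erase e₀).filter (fun e => e.1 = ω i.castSucc),
        (if e = e₀ then 0 else G.c e) = _
    have hfil : (G.E.erase e₀).filter (fun e => e.1 = ω i.castSucc)
        = G.E.filter (fun e => e.1 = ω i.castSucc) := by
      ext e
      simp only [Finset.mem_filter, Finset.mem_erase]
      constructor
      · rintro ⟨⟨_, he⟩, h1⟩; exact ⟨he, h1⟩
      · rintro ⟨he, h1⟩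
        exact ⟨⟨fun h => hne (h1.symm.trans (congrArg Prod.fst h)), he⟩, h1⟩
    rw [hfil]
    refine Finset.sum_congr rfl fun e he => ?_
    rw [if_neg (fun h =>
      hne (((Finset.mem_filter.mp he).2).symm.trans (congrArg Prod.fst h)))]
  rw [hcc, hdeg]

lemma regroup {α β : Type*} [DecidableEq β] (A : Finset α) (B : Finset β) (f : α → β)
    (hf : ∀ x ∈ A, f x ∈ B) (g : α → β → ℝ) :
    ∑ b ∈ B, ∑ x ∈ A.filter (fun x => f x = b), g x b = ∑ x ∈ A, g x (f x) := by
  calc ∑ b ∈ B, ∑ x ∈ A.filter (fun x => f x = b), g x b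
      = ∑ b ∈ B, ∑ x ∈ A, if f x = b then g x b else 0 :=
        Finset.sum_congr rfl fun b _ => Finset.sum_filter _ _
    _ = ∑ x ∈ A, ∑ b ∈ B, if f x = b then g x b else 0 := Finset.sum_comm
    _ = ∑ x ∈ A, g x (f x) := Finset.sum_congr rfl fun x hx => by
        rw [Finset.sum_ite_eq B (f x) (g x), if_pos (hf x hx)]

end PRaux

/-- The merge map of `combine`. -/
def mFun (u w : ℕ) (x : ℕ) : ℕ := if x = u then w else x

/-- The scaling function of `combine`. -/
noncomputable def scFun (F : PRGraph → ℕ → ℝ) (G : PRGraph) (u w : ℕ) (e : ℕ × ℕ) : ℝ :=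
  (if e.1 = u then F G u / (F G u + F G w)
   else if e.1 = w then F G w / (F G u + F G w) else 1) * G.c e

/-- The candidate PageRank values for the combined graph. -/
noncomputable def xCand (a : ℝ) (G : PRGraph) (u w : ℕ) (s : ℕ) : ℝ :=
  if s = w then G.PageRank a u + G.PageRank a w else G.PageRank a s

namespace PRaux

lemma combine_V (F : PRGraph → ℕ → ℝ) (G : PRGraph) (u w : ℕ) :
    (combine F G u w).V = G.V.erase u := rfl

lemma combine_E (F : PRGraph → ℕ → ℝ) (G : PRGraph) (u w : ℕ) :
    (combine F G u w).E = G.E.image (fun e => (mFun u w e.1, mFun u w e.2)) := rfl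

lemma combine_b (F : PRGraph → ℕ → ℝ) (G : PRGraph) (u w v : ℕ) :
    (combine F G u w).b v
      = if v = u then 0 else if v = w then G.b u + G.b w else G.b v := rfl

lemma combine_c (F : PRGraph → ℕ → ℝ) (G : PRGraph) (u w : ℕ) (e' : ℕ × ℕ) :
    (combine F G u w).c e'
      = ∑ e ∈ G.E.filter (fun e => (mFun u w e.1, mFun u w e.2) = e'),
          scFun F G u w e := by
  show (if e' ∈ G.E.image (fun e => (mFun u w e.1, mFun u w e.2)) then
      ∑ e ∈ G.E.filter (fun e => (mFun u w e.1, mFun u w e.2) = e'), scFun F G u w e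
    else 0) = _
  split_ifs with h
  · rfl
  · rw [Finset.filter_eq_empty_iff.mpr
      (fun e he heq => h (Finset.mem_image.mpr ⟨e, he, heq⟩)), Finset.sum_empty]

lemma NC_pagerank (ha0 : 0 ≤ a) (ha1 : a < 1) : NC PRGraph.Valid (PRGraph.PageRank a) := by
  intro G hG u hu w hw huw hdegeq hsuc hval'
  have hFu0 : 0 ≤ G.PageRank a u := PageRank_nonneg hG ha0 u
  have hFw0 : 0 ≤ G.PageRank a w := PageRank_nonneg hG ha0 w
  have hmV : ∀ e ∈ G.E, mFun u w e.1 ∈ (combine (PRGraph.PageRank a) G u w).V := by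
    intro e he
    rw [combine_V]
    unfold mFun
    by_cases h : e.1 = u
    · rw [if_pos h]; exact Finset.mem_erase.mpr ⟨Ne.symm huw, hw⟩
    · rw [if_neg h]; exact Finset.mem_erase.mpr ⟨h, (hG.1 e he).1⟩
  -- out-degrees in the combined graph
  have hdeg' : ∀ s : ℕ, (combine (PRGraph.PageRank a) G u w).degOut s
      = ∑ e ∈ G.E.filter (fun e => mFun u w e.1 = s), scFun (PRGraph.PageRank a) G u w e := by
    intro s
    have hinner : ∀ e' ∈ ((combine (PRGraph.PageRank a) G u w).E).filter (fun e' => e'.1 = s),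
        (combine (PRGraph.PageRank a) G u w).c e'
          = ∑ e ∈ (G.E.filter (fun e => mFun u w e.1 = s)).filter
              (fun e => (mFun u w e.1, mFun u w e.2) = e'), scFun (PRGraph.PageRank a) G u w e := by
      intro e' he'
      rw [combine_c]
      congr 1
      ext e
      simp only [Finset.mem_filter]
      constructor
      · rintro ⟨he, heq⟩
        exact ⟨⟨he, (congrArg Prod.fst heq).trans (Finset.mem_filter.mp he').2⟩, heq⟩
      · rintro ⟨⟨he, _⟩, heq⟩
        exact ⟨he, heq⟩
    rw [show (combine (PRGraph.PageRank a) G u w).degOut s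
        = ∑ e' ∈ ((combine (PRGraph.PageRank a) G u w).E).filter (fun e' => e'.1 = s),
            (combine (PRGraph.PageRank a) G u w).c e' from rfl,
      Finset.sum_congr rfl hinner,
      regroup _ _ _ ?_ (fun e _ => scFun (PRGraph.PageRank a) G u w e)]
    intro e he
    obtain ⟨heE, heq⟩ := Finset.mem_filter.mp he
    rw [combine_E]
    exact Finset.mem_filter.mpr ⟨Finset.mem_image.mpr ⟨e, heE, rfl⟩, heq⟩
  have hdegne : ∀ s : ℕ, s ≠ u → s ≠ w →
      (combine (PRGraph.PageRank a) G u w).degOut s = G.degOut s := by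
    intro s hsu hsw
    rw [hdeg' s]
    have hfil : G.E.filter (fun e => mFun u w e.1 = s) = G.E.filter (fun e => e.1 = s) := by
      ext e
      simp only [Finset.mem_filter]
      refine and_congr_right fun _ => ?_
      unfold mFun
      by_cases h : e.1 = u
      · rw [if_pos h, h]
        exact ⟨fun hws => absurd hws.symm hsw, fun hus => absurd hus.symm hsu⟩
      · rw [if_neg h]
    rw [hfil]
    refine Finset.sum_congr rfl fun e he => ?_
    unfold scFun
    have h1 := (Finset.mem_filter.mp he).2
    rw [if_neg (fun h => hsu (h1.symm.trans h)), if_neg (fun h => hsw (h1.symm.trans h)), one_mul]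
  have hdisj1 : Disjoint (G.E.filter (fun e => e.1 = u)) (G.E.filter (fun e => e.1 = w)) :=
    Finset.disjoint_left.mpr fun e h1 h2 =>
      huw ((Finset.mem_filter.mp h1).2.symm.trans (Finset.mem_filter.mp h2).2)
  have hdisj2 : Disjoint (G.E.filter (fun e => e.2 = u)) (G.E.filter (fun e => e.2 = w)) :=
    Finset.disjoint_left.mpr fun e h1 h2 =>
      huw ((Finset.mem_filter.mp h1).2.symm.trans (Finset.mem_filter.mp h2).2)
  have hdegw : (combine (PRGraph.PageRank a) G u w).degOut w
      = G.PageRank a u / (G.PageRank a u + G.PageRank a w) * G.degOut u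
        + G.PageRank a w / (G.PageRank a u + G.PageRank a w) * G.degOut w := by
    rw [hdeg' w]
    have hfil : G.E.filter (fun e => mFun u w e.1 = w)
        = G.E.filter (fun e => e.1 = u) ∪ G.E.filter (fun e => e.1 = w) := by
      rw [← Finset.filter_or]
      ext e
      simp only [Finset.mem_filter]
      refine and_congr_right fun _ => ?_
      unfold mFun
      by_cases h : e.1 = u
      · simp [h]
      · simp [h]
    rw [hfil, Finset.sum_union hdisj1]
    congr 1
    · rw [show G.degOut u = ∑ e ∈ G.E.filter (fun e => e.1 = u), G.c e from rfl,
        Finset.mul_sum]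
      refine Finset.sum_congr rfl fun e he => ?_
      unfold scFun
      rw [if_pos (Finset.mem_filter.mp he).2]
    · rw [show G.degOut w = ∑ e ∈ G.E.filter (fun e => e.1 = w), G.c e from rfl,
        Finset.mul_sum]
      refine Finset.sum_congr rfl fun e he => ?_
      unfold scFun
      have h2 := (Finset.mem_filter.mp he).2
      rw [if_neg (fun h => huw (h.symm.trans h2)), if_pos h2]
  have hsum' : ∀ v : ℕ,
      ∑ s ∈ (combine (PRGraph.PageRank a) G u w).V,
          xCand a G u w s * (a * (combine (PRGraph.PageRank a) G u w).c (s, v)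
            / (combine (PRGraph.PageRank a) G u w).degOut s)
      = ∑ e ∈ G.E.filter (fun e => mFun u w e.2 = v),
          xCand a G u w (mFun u w e.1) * (a * scFun (PRGraph.PageRank a) G u w e
            / (combine (PRGraph.PageRank a) G u w).degOut (mFun u w e.1)) := by
    intro v
    have h1 : ∀ s ∈ (combine (PRGraph.PageRank a) G u w).V,
        xCand a G u w s * (a * (combine (PRGraph.PageRank a) G u w).c (s, v)
          / (combine (PRGraph.PageRank a) G u w).degOut s)
        = ∑ e ∈ (G.E.filter (fun e => mFun u w e.2 = v)).filter
            (fun e => mFun u w e.1 = s),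
            xCand a G u w s * (a * scFun (PRGraph.PageRank a) G u w e
              / (combine (PRGraph.PageRank a) G u w).degOut s) := by
      intro s _
      rw [combine_c, Finset.mul_sum, Finset.sum_div, Finset.mul_sum]
      congr 1
      ext e
      simp only [Finset.mem_filter, Prod.mk.injEq]
      constructor
      · rintro ⟨he, hh1, hh2⟩
        exact ⟨⟨he, hh2⟩, hh1⟩
      · rintro ⟨⟨he, hh2⟩, hh1⟩
        exact ⟨he, hh1, hh2⟩
    rw [Finset.sum_congr rfl h1]
    exact regroup _ _ (fun e => mFun u w e.1)
      (fun e he => hmV e (Finset.mem_filter.mp he).1)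
      (fun e s => xCand a G u w s * (a * scFun (PRGraph.PageRank a) G u w e
        / (combine (PRGraph.PageRank a) G u w).degOut s))
  have hterm : ∀ e ∈ G.E,
      xCand a G u w (mFun u w e.1) * (a * scFun (PRGraph.PageRank a) G u w e
        / (combine (PRGraph.PageRank a) G u w).degOut (mFun u w e.1))
      = G.PageRank a e.1 * (a * G.c e / G.degOut e.1) := by
    intro e he
    by_cases h1 : e.1 = u
    · have hmw : mFun u w e.1 = w := by unfold mFun; rw [if_pos h1]
      rw [hmw, hdegw, show xCand a G u w w = G.PageRank a u + G.PageRank a w from if_pos rfl,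
        show scFun (PRGraph.PageRank a) G u w e
          = G.PageRank a u / (G.PageRank a u + G.PageRank a w) * G.c e from by
            unfold scFun; rw [if_pos h1], h1, ← hdegeq]
      by_cases hP : G.PageRank a u + G.PageRank a w = 0
      · have hFu : G.PageRank a u = 0 := le_antisymm (by linarith) hFu0
        rw [hP, hFu, zero_mul, zero_mul]
      · have hdw : G.PageRank a u / (G.PageRank a u + G.PageRank a w) * G.degOut u
            + G.PageRank a w / (G.PageRank a u + G.PageRank a w) * G.degOut u
            = G.degOut u := by
          rw [show G.PageRank a u / (G.PageRank a u + G.PageRank a w) * G.degOut u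
              + G.PageRank a w / (G.PageRank a u + G.PageRank a w) * G.degOut u
              = (G.PageRank a u + G.PageRank a w) / (G.PageRank a u + G.PageRank a w)
                * G.degOut u from by ring, div_self hP, one_mul]
        rw [hdw, show (G.PageRank a u + G.PageRank a w)
            * (a * (G.PageRank a u / (G.PageRank a u + G.PageRank a w) * G.c e)
              / G.degOut u)
            = (G.PageRank a u / (G.PageRank a u + G.PageRank a w)
              * (G.PageRank a u + G.PageRank a w)) * (a * G.c e / G.degOut u) from by ring,
          div_mul_cancel₀ _ hP]
    · by_cases h2 : e.1 = w
      · have hmw : mFun u w e.1 = w := by unfold mFun; rw [if_neg h1, h2]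
        rw [hmw, hdegw, show xCand a G u w w = G.PageRank a u + G.PageRank a w from
          if_pos rfl,
          show scFun (PRGraph.PageRank a) G u w e
            = G.PageRank a w / (G.PageRank a u + G.PageRank a w) * G.c e from by
              unfold scFun; rw [if_neg h1, if_pos h2], h2, ← hdegeq]
        by_cases hP : G.PageRank a u + G.PageRank a w = 0
        · have hFw : G.PageRank a w = 0 := le_antisymm (by linarith) hFw0
          rw [hP, hFw, zero_mul, zero_mul]
        · have hdw : G.PageRank a u / (G.PageRank a u + G.PageRank a w) * G.degOut u
              + G.PageRank a w / (G.PageRank a u + G.PageRank a w) * G.degOut u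
              = G.degOut u := by
            rw [show G.PageRank a u / (G.PageRank a u + G.PageRank a w) * G.degOut u
                + G.PageRank a w / (G.PageRank a u + G.PageRank a w) * G.degOut u
                = (G.PageRank a u + G.PageRank a w) / (G.PageRank a u + G.PageRank a w)
                  * G.degOut u from by ring, div_self hP, one_mul]
          rw [hdw, show (G.PageRank a u + G.PageRank a w)
              * (a * (G.PageRank a w / (G.PageRank a u + G.PageRank a w) * G.c e)
                / G.degOut u)
              = (G.PageRank a w / (G.PageRank a u + G.PageRank a w)
                * (G.PageRank a u + G.PageRank a w)) * (a * G.c e / G.degOut u) from by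
                  ring,
            div_mul_cancel₀ _ hP]
      · have hmm : mFun u w e.1 = e.1 := by unfold mFun; rw [if_neg h1]
        rw [hmm, hdegne e.1 h1 h2,
          show xCand a G u w e.1 = G.PageRank a e.1 from if_neg h2,
          show scFun (PRGraph.PageRank a) G u w e = G.c e from by
            unfold scFun; rw [if_neg h1, if_neg h2, one_mul]]
  have hGrec : ∀ y ∈ G.V, G.PageRank a y
      = G.b y + ∑ e ∈ G.E.filter (fun e => e.2 = y),
          G.PageRank a e.1 * (a * G.c e / G.degOut e.1) := by
    intro y hy
    rw [PageRank_rec hG ha0 ha1 y, if_pos hy]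
    congr 1
    rw [← sum_over_V_in hG y (fun e => G.PageRank a e.1 * (a * G.c e / G.degOut e.1))
      (fun s hs => by
        show G.PageRank a s * (a * G.c (s, y) / G.degOut s) = 0
        rw [c_eq_zero hG hs]; ring)]
  have hxrec : ∀ v ∈ (combine (PRGraph.PageRank a) G u w).V, xCand a G u w v
      = (combine (PRGraph.PageRank a) G u w).b v
        + ∑ s ∈ (combine (PRGraph.PageRank a) G u w).V,
            xCand a G u w s * (a * (combine (PRGraph.PageRank a) G u w).c (s, v)
              / (combine (PRGraph.PageRank a) G u w).degOut s) := by
    intro v hv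
    obtain ⟨hvu, hvV⟩ := Finset.mem_erase.mp (combine_V (PRGraph.PageRank a) G u w ▸ hv)
    rw [hsum' v, Finset.sum_congr rfl (fun e he => hterm e (Finset.mem_filter.mp he).1),
      combine_b]
    by_cases hvw : v = w
    · subst hvw
      rw [if_neg hvu, if_pos rfl]
      have hfil : G.E.filter (fun e => mFun u v e.2 = v)
          = G.E.filter (fun e => e.2 = u) ∪ G.E.filter (fun e => e.2 = v) := by
        rw [← Finset.filter_or]
        ext e
        simp only [Finset.mem_filter]
        refine and_congr_right fun _ => ?_
        unfold mFun
        by_cases h : e.2 = u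
        · simp [h]
        · simp [h]
      rw [hfil, Finset.sum_union hdisj2,
        show xCand a G u v v = G.PageRank a u + G.PageRank a v from if_pos rfl,
        hGrec u hu, hGrec v hw]
      ring
    · rw [if_neg hvu, if_neg hvw]
      have hfil : G.E.filter (fun e => mFun u w e.2 = v)
          = G.E.filter (fun e => e.2 = v) := by
        ext e
        simp only [Finset.mem_filter]
        refine and_congr_right fun _ => ?_
        unfold mFun
        by_cases h : e.2 = u
        · rw [if_pos h, h]
          exact iff_of_false (fun hh => hvw hh.symm) (fun hh => hvu hh.symm)
        · rw [if_neg h]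
      rw [hfil]
      exact (show xCand a G u w v = G.PageRank a v from if_neg hvw).trans (hGrec v hvV)
  have hPRrec : ∀ v ∈ (combine (PRGraph.PageRank a) G u w).V,
      (combine (PRGraph.PageRank a) G u w).PageRank a v
      = (combine (PRGraph.PageRank a) G u w).b v
        + ∑ s ∈ (combine (PRGraph.PageRank a) G u w).V,
            (combine (PRGraph.PageRank a) G u w).PageRank a s
              * (a * (combine (PRGraph.PageRank a) G u w).c (s, v)
                / (combine (PRGraph.PageRank a) G u w).degOut s) := by
    intro v hv
    rw [PageRank_rec hval' ha0 ha1 v, if_pos hv]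
  have huniq := recur_unique hval' ha0 ha1 _ _ hPRrec hxrec
  constructor
  · intro v hvV hvu hvw
    have hv' : v ∈ (combine (PRGraph.PageRank a) G u w).V := by
      rw [combine_V]; exact Finset.mem_erase.mpr ⟨hvu, hvV⟩
    rw [huniq v hv']
    exact if_neg hvw
  · have hw' : w ∈ (combine (PRGraph.PageRank a) G u w).V := by
      rw [combine_V]; exact Finset.mem_erase.mpr ⟨Ne.symm huw, hw⟩
    rw [huniq w hw']
    exact if_pos rfl


end PRaux



end Helpers

/-- For every decay factor `a ∈ [0,1)`, PageRank `PR^a`, defined on the class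
`𝒢` of all graphs, satisfies LOC, ED, NC, EM and BL. -/
theorem pagerank_satisfies_axioms (a : ℝ) (ha0 : 0 ≤ a) (ha1 : a < 1) :
    LOC PRGraph.Valid (PRGraph.PageRank a) ∧ ED PRGraph.Valid (PRGraph.PageRank a) ∧
    NC PRGraph.Valid (PRGraph.PageRank a) ∧ EM PRGraph.Valid (PRGraph.PageRank a) ∧
    BL PRGraph.Valid (PRGraph.PageRank a) :=
  ⟨PRaux.LOC_pagerank, PRaux.ED_pagerank, PRaux.NC_pagerank ha0 ha1,
    PRaux.EM_pagerank, PRaux.BL_pagerank ha0⟩
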